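/- Let n, n1, n2, n3 be integers with n = n1 - n2 + n3, n1 ≠ n and n3 ≠ n. Then |n1^4 - n2^4 + n3^4 - n^4| ≥ max(n1^2, n2^2, n3^2, n^2). -/
import Mathlib

theorem phase_lower_bound (n n1 n2 n3 : ℤ) (h : n = n1 - n2 + n3)
    (h1 : n1 ≠ n) (h3 : n3 ≠ n) :
    max (max (n1 ^ 2) (n2 ^ 2)) (max (n3 ^ 2) (n ^ 2)) ≤
      |n1 ^ 4 - n2 ^ 4 + n3 ^ 4 - n ^ 4| := by
  set S : ℤ := n1 ^ 2 + n2 ^ 2 + n3 ^ 2 + n ^ 2 + 2 * (n1 + n3) ^ 2 with hSdef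
  have key : n1 ^ 4 - n2 ^ 4 + n3 ^ 4 - n ^ 4 = -((n - n1) * ((n - n3) * S)) := by
    subst h; ring
  have ha : 1 ≤ |n - n1| := Int.one_le_abs (sub_ne_zero.mpr (Ne.symm h1))
  have hb : 1 ≤ |n - n3| := Int.one_le_abs (sub_ne_zero.mpr (Ne.symm h3))
  have hS : 0 ≤ S := by positivity
  have habs : |n1 ^ 4 - n2 ^ 4 + n3 ^ 4 - n ^ 4| = |n - n1| * (|n - n3| * S) := by
    rw [key, abs_neg, abs_mul, abs_mul, abs_of_nonneg hS]
  rw [habs]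
  have hStep : S ≤ |n - n1| * (|n - n3| * S) :=
    le_trans (le_mul_of_one_le_left hS hb) (le_mul_of_one_le_left (by positivity) ha)
  refine le_trans ?_ hStep
  simp only [max_le_iff]
  refine ⟨⟨?_, ?_⟩, ?_, ?_⟩ <;> nlinarith [sq_nonneg n1, sq_nonneg n2, sq_nonneg n3, sq_nonneg n, sq_nonneg (n1 + n3)]
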